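/- Let H be a finite simple graph and let v and w be two distinct vertices of H. A nonempty set E of edges of H is the edge set of a path from v to w if and only if E is minimal (with respect to inclusion) among the sets of edges of H such that, in the subgraph of H formed by the edges of E, the vertices of odd degree are exactly v and w. -/

import Mathlib

open Finset

private lemma mem_support_of_mem_edges' {V : Type*} {G : SimpleGraph V} {u w x : V}
    (p : G.Walk u w) {e : Sym2 V} (he : e ∈ p.edges) (hx : x ∈ e) : x ∈ p.support := by
  induction e with
  | _ a b =>
    rcases Sym2.mem_iff.mp hx with rfl | rfl
    · exact p.fst_mem_support_of_mem_edges he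
    · exact p.snd_mem_support_of_mem_edges he

/-- parity of incidence counts in a trail's edge finset -/
private lemma trail_parity {V : Type*} [DecidableEq V] {G : SimpleGraph V} {u w : V}
    (p : G.Walk u w) (hp : p.IsTrail) (huw : u ≠ w) (x : V) :
    Odd ((p.edges.toFinset.filter (fun e => x ∈ e)).card) ↔ (x = u ∨ x = w) := by
  have hnd : p.edges.Nodup := hp.edges_nodup
  have hset : p.edges.toFinset.filter (fun e => x ∈ e)
      = (p.edges.filter (fun e => x ∈ e)).toFinset := by
    ext e; simp [List.mem_filter]
  have hcard : (p.edges.toFinset.filter (fun e => x ∈ e)).card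
      = p.edges.countP (fun e => x ∈ e) := by
    rw [hset, List.toFinset_card_of_nodup (hnd.filter _)]
    exact List.countP_eq_length_filter.symm
  rw [hcard, Nat.not_even_iff_odd.symm, hp.even_countP_edges_iff x]
  constructor
  · intro h
    by_contra hc
    push_neg at hc
    exact h (fun _ => ⟨hc.1, hc.2⟩)
  · rintro (rfl | rfl) h
    · exact (h huw).1 rfl
    · exact (h huw).2 rfl

/-- a subset of a path's edges in which every vertex has even incidence count is empty -/
private lemma even_sub_path {V : Type*} [DecidableEq V] {G : SimpleGraph V} {u w : V}
    (p : G.Walk u w) (hp : p.IsPath) (D : Finset (Sym2 V)) (hD : D ⊆ p.edges.toFinset)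
    (heven : ∀ x : V, Even ((D.filter (fun e => x ∈ e)).card)) : D = ∅ := by
  induction p with
  | nil =>
    simp only [SimpleGraph.Walk.edges_nil, List.toFinset_nil] at hD
    exact Finset.subset_empty.mp hD
  | @cons a b c h q ih =>
    rw [SimpleGraph.Walk.cons_isPath_iff] at hp
    have hmem : ∀ e ∈ D, e ∈ q.edges.toFinset ∨ e = s(a, b) := by
      intro e heD
      have := hD heD
      simp only [SimpleGraph.Walk.edges_cons, List.toFinset_cons, Finset.mem_insert] at this
      tauto
    have hnotin : s(a, b) ∉ D := by
      intro hin
      have hfil : D.filter (fun e => a ∈ e) = {s(a, b)} := by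
        apply Finset.ext
        intro e
        simp only [Finset.mem_filter, Finset.mem_singleton]
        constructor
        · rintro ⟨heD, hae⟩
          rcases hmem e heD with hq | rfl
          · exact absurd (mem_support_of_mem_edges' q (List.mem_toFinset.mp hq) hae) hp.2
          · rfl
        · rintro rfl
          exact ⟨hin, by simp⟩
      have := heven a
      rw [hfil] at this
      simp at this
    have hDq : D ⊆ q.edges.toFinset := by
      intro e heD
      rcases hmem e heD with hq | rfl
      · exact hq
      · exact absurd heD hnotin
    exact ih hp.1 hDq

theorem stmt_0 {V : Type*} [Fintype V] [DecidableEq V]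
    (H : SimpleGraph V) [DecidableRel H.Adj]
    (v w : V) (hvw : v ≠ w)
    (E : Finset (Sym2 V)) (hE : E ⊆ H.edgeFinset) (hne : E.Nonempty) :
    (∃ p : H.Walk v w, p.IsPath ∧ p.edges.toFinset = E) ↔
      ((∀ x : V, Odd (E.filter (fun e => x ∈ e)).card ↔ (x = v ∨ x = w)) ∧
        ∀ E' ⊆ E,
          (∀ x : V, Odd (E'.filter (fun e => x ∈ e)).card ↔ (x = v ∨ x = w)) →
          E' = E) := by
  classical
  constructor
  · rintro ⟨p, hp, rfl⟩
    refine ⟨fun x => trail_parity p hp.isTrail hvw x, ?_⟩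
    intro E' hE'sub hpar'
    have key : ∀ x : V, Even (((p.edges.toFinset \ E').filter (fun e => x ∈ e)).card) := by
      intro x
      have hsplit : (p.edges.toFinset.filter (fun e => x ∈ e)).card
          = (E'.filter (fun e => x ∈ e)).card
            + ((p.edges.toFinset \ E').filter (fun e => x ∈ e)).card := by
        rw [← Finset.card_union_of_disjoint, ← Finset.filter_union,
          Finset.union_sdiff_of_subset hE'sub]
        exact Finset.disjoint_filter_filter (Finset.disjoint_sdiff)
      have h1 := (trail_parity p hp.isTrail hvw x).trans (hpar' x).symm
      rw [Nat.odd_iff, Nat.odd_iff, hsplit] at h1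
      rw [Nat.even_iff]
      omega
    have := even_sub_path p hp (p.edges.toFinset \ E') Finset.sdiff_subset key
    have hsub2 : p.edges.toFinset ⊆ E' := by
      intro e he
      by_contra hc
      have hmem : e ∈ p.edges.toFinset \ E' := Finset.mem_sdiff.mpr ⟨he, hc⟩
      rw [this] at hmem
      exact absurd hmem (Finset.notMem_empty e)
    exact Finset.Subset.antisymm hE'sub hsub2
  · rintro ⟨hpar, hmin⟩
    -- the graph formed by the edges of E
    set G : SimpleGraph V := SimpleGraph.fromEdgeSet (↑E) with hG
    have hEsub : (↑E : Set (Sym2 V)) ⊆ H.edgeSet := by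
      intro e he
      exact SimpleGraph.mem_edgeFinset.mp (hE he)
    have hGE : G.edgeSet = ↑E := by
      rw [hG, SimpleGraph.edgeSet_fromEdgeSet]
      ext e
      simp only [Set.mem_diff, Set.mem_setOf_eq, and_iff_left_iff_imp]
      intro heE hdiag
      exact H.not_isDiag_of_mem_edgeSet (hEsub heE) hdiag
    have hGle : G ≤ H := by
      rw [← SimpleGraph.edgeSet_subset_edgeSet, hGE]
      exact hEsub
    have hdeg : ∀ x : V, G.degree x = (E.filter (fun e => x ∈ e)).card := by
      intro x
      rw [← SimpleGraph.card_incidenceFinset_eq_degree, SimpleGraph.incidenceFinset_eq_filter]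
      congr 1
      congr 1
      apply Finset.coe_injective
      rw [SimpleGraph.coe_edgeFinset, hGE]
    -- restricted graph on the component of v
    have hreach : G.Reachable v w := by
      by_contra hnr
      set G' : SimpleGraph V :=
        { Adj := fun x y => G.Adj x y ∧ G.Reachable v x
          symm := ⟨fun x y ⟨ha, hr⟩ => ⟨ha.symm, hr.trans ha.reachable⟩⟩
          loopless := ⟨fun x ⟨ha, _⟩ => G.loopless.irrefl x ha⟩ } with hG'
      have hdeg' : ∀ x : V, G.Reachable v x → G'.degree x = G.degree x := by
        intro x hr
        have hnb : G'.neighborFinset x = G.neighborFinset x := by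
          ext y
          simp only [SimpleGraph.mem_neighborFinset]
          change (G.Adj x y ∧ G.Reachable v x) ↔ G.Adj x y
          exact and_iff_left hr
        rw [← SimpleGraph.card_neighborFinset_eq_degree,
          ← SimpleGraph.card_neighborFinset_eq_degree, hnb]
      have hdeg0 : ∀ x : V, ¬ G.Reachable v x → G'.degree x = 0 := by
        intro x hr
        rw [← SimpleGraph.card_neighborFinset_eq_degree, Finset.card_eq_zero]
        ext y
        simp only [SimpleGraph.mem_neighborFinset, Finset.notMem_empty, iff_false, hG']
        rintro ⟨_, hrx⟩
        exact hr hrx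
      have heven := SimpleGraph.even_card_odd_degree_vertices G'
      have hfil : (Finset.univ.filter fun x => Odd (G'.degree x)) = {v} := by
        ext x
        simp only [Finset.mem_filter, Finset.mem_univ, true_and, Finset.mem_singleton]
        constructor
        · intro hodd
          by_cases hr : G.Reachable v x
          · rw [hdeg' x hr, hdeg x] at hodd
            rcases (hpar x).mp hodd with rfl | rfl
            · rfl
            · exact absurd hr hnr
          · rw [hdeg0 x hr] at hodd
            simp at hodd
        · intro hx
          rw [hx, hdeg' v (SimpleGraph.Reachable.refl v), hdeg v]
          exact (hpar v).mpr (Or.inl rfl)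
      rw [hfil] at heven
      simp at heven
    obtain ⟨p0⟩ := hreach
    set p1 : G.Walk v w := p0.toPath.1
    have hp1 : p1.IsPath := p0.toPath.2
    have hp1edges : ∀ e ∈ p1.edges, e ∈ H.edgeSet := by
      intro e he
      exact hEsub (hGE ▸ p1.edges_subset_edgeSet he)
    set q : H.Walk v w := p1.transfer H hp1edges with hq
    have hqpath : q.IsPath := hp1.transfer hp1edges
    have hqedges : q.edges = p1.edges := p1.edges_transfer hp1edges
    have hqsub : q.edges.toFinset ⊆ E := by
      intro e he
      rw [hqedges] at he
      exact_mod_cast hGE ▸ p1.edges_subset_edgeSet (List.mem_toFinset.mp he)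
    have := hmin q.edges.toFinset hqsub (fun x => trail_parity q hqpath.isTrail hvw x)
    exact ⟨q, hqpath, this⟩
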